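/- The branching rule for Spin(2n) restricted to Spin(2n−1): for a dominant weight λ = (λ_1,...,λ_n) of Spin(2n) (all integers or all half-integers, λ_1 ≥ ... ≥ λ_{n−1} ≥ λ_n ≥ 0), the character identity χ^{D_n}_λ|_{x_n=1} = ∑_{μ ⪯ λ} χ^{B_{n−1}}_μ holds, where the sum is over dominant weights μ of Spin(2n−1) with λ_1 ≥ μ_1 ≥ λ_2 ≥ ... ≥ μ_{n−1} ≥ λ_n. -/

import Mathlib

/-- `D⁺`, with `y i = x_i^{1/2}` a fixed square root and exponents doubled. -/
noncomputable def Dplus {R : Type*} [CommRing R] {n : ℕ} (y : Fin n → Rˣ) (L : Fin n → ℤ) : R :=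
  (Matrix.of fun i j : Fin n => ((y j ^ L i : Rˣ) : R) + ((y j ^ (-L i) : Rˣ) : R)).det

/-- `D⁻`, with doubled exponents in the square-root variables. -/
noncomputable def Dminus {R : Type*} [CommRing R] {n : ℕ} (y : Fin n → Rˣ) (L : Fin n → ℤ) : R :=
  (Matrix.of fun i j : Fin n => ((y j ^ L i : Rˣ) : R) - ((y j ^ (-L i) : Rˣ) : R)).det

section helpers

variable {F : Type*} [Field F]

lemma tele_nat (y : Fˣ) (b : ℤ) (k : ℕ) :
    ((y ^ (b + 2 * (k : ℤ)) : Fˣ) : F) + ((y ^ (-(b + 2 * (k : ℤ))) : Fˣ) : F) =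
      ((y ^ b : Fˣ) : F) + ((y ^ (-b) : Fˣ) : F) +
        ∑ j ∈ Finset.range k, ((y : F) - ((y⁻¹ : Fˣ) : F)) *
          (((y ^ (b + 2 * (j : ℤ) + 1) : Fˣ) : F) - ((y ^ (-(b + 2 * (j : ℤ) + 1)) : Fˣ) : F)) := by
  induction k with
  | zero => simp
  | succ k ih =>
      rw [Finset.sum_range_succ, ← add_assoc, ← ih]
      push_cast
      have hx : (y : F) ≠ 0 := Units.ne_zero y
      have h : ∀ a c : ℤ, (y : F) ^ (a + c) = (y : F) ^ a * (y : F) ^ c := fun a c =>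
        zpow_add₀ hx a c
      generalize hB : b + 2 * (k : ℤ) + 1 = B
      have e1 : b + 2 * ((k : ℤ) + 1) = B + 1 := by omega
      have e2 : -(b + 2 * ((k : ℤ) + 1)) = -B + (-1) := by omega
      have e4 : -(b + 2 * (k : ℤ)) = -B + 1 := by omega
      have e3 : b + 2 * (k : ℤ) = B + (-1) := by omega
      rw [e2, e1, e4, e3, h, h, h, h, zpow_one,
        show (y : F) ^ (-1 : ℤ) = ((y : F))⁻¹ by simp]
      ring

lemma tele (y : Fˣ) (a b : ℤ) (hba : b ≤ a) (hpar : (a - b) % 2 = 0) :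
    ((y ^ a : Fˣ) : F) + ((y ^ (-a) : Fˣ) : F) =
      ((y ^ b : Fˣ) : F) + ((y ^ (-b) : Fˣ) : F) +
        ∑ m ∈ (Finset.Ioo b a).filter (fun m => (m - b) % 2 = 1),
          ((y : F) - ((y⁻¹ : Fˣ) : F)) * (((y ^ m : Fˣ) : F) - ((y ^ (-m) : Fˣ) : F)) := by
  obtain ⟨k, hk⟩ : ∃ k : ℕ, a = b + 2 * (k : ℤ) := ⟨((a - b) / 2).toNat, by omega⟩
  subst hk
  rw [tele_nat]
  congr 1
  refine Finset.sum_nbij' (fun j : ℕ => b + 2 * (j : ℤ) + 1)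
    (fun m : ℤ => ((m - b - 1) / 2).toNat) ?_ ?_ ?_ ?_ ?_
  · intro j hj
    simp only [Finset.mem_range] at hj
    simp only [Finset.mem_filter, Finset.mem_Ioo]
    omega
  · intro m hm
    simp only [Finset.mem_filter, Finset.mem_Ioo] at hm
    simp only [Finset.mem_range]
    omega
  · intro j hj
    simp only [Finset.mem_range] at hj
    omega
  · intro m hm
    simp only [Finset.mem_filter, Finset.mem_Ioo] at hm
    omega
  · intro j hj; rfl

lemma det_rowsub {R : Type*} [CommRing R] {n : ℕ} (M : Matrix (Fin (n + 1)) (Fin (n + 1)) R) :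
    M.det =
      (Matrix.of fun i j : Fin (n + 1) =>
        if (i : ℕ) < n then M i j - M (i + 1) j else M i j).det := by
  set A : ℕ → Matrix (Fin (n + 1)) (Fin (n + 1)) R := fun k =>
    Matrix.of fun i j : Fin (n + 1) =>
      if (i : ℕ) < k then M i j - M (i + 1) j else M i j with hA
  have key : ∀ k, k ≤ n → (A k).det = M.det := by
    intro k
    induction k with
    | zero =>
        intro _
        have h0 : A 0 = M := by
          ext i j
          simp [hA]
        rw [h0]
    | succ k ih =>
        intro hk
        have hkn : k < n := hk
        have ihk := ih (le_of_lt hkn)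
        set p : Fin (n + 1) := ⟨k, by omega⟩ with hp
        have hpk : (p : ℕ) = k := rfl
        have hpv : ((p + 1 : Fin (n + 1)) : ℕ) = k + 1 := by
          have hlt : p < Fin.last n := by
            rw [Fin.lt_def]; simpa [hp] using hkn
          rw [Fin.val_add_one_of_lt hlt, hpk]
        have hne : p ≠ p + 1 := by
          intro h
          have := congrArg Fin.val h
          rw [hpv, hpk] at this
          omega
        rw [← ihk, ← Matrix.det_updateRow_add_smul_self (A k) hne (-1 : R)]
        congr 1
        ext i j
        by_cases hip : i = p
        · rw [hip, Matrix.updateRow_self]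
          have h1 : A k p j = M p j := by
            simp only [hA, Matrix.of_apply]
            rw [if_neg (by omega : ¬ ((p : ℕ) < k))]
          have h2 : A k (p + 1) j = M (p + 1) j := by
            simp only [hA, Matrix.of_apply]
            rw [if_neg (by omega : ¬ (((p + 1 : Fin (n + 1)) : ℕ) < k))]
          simp only [Pi.add_apply, Pi.smul_apply, smul_eq_mul, h1, h2]
          simp only [hA, Matrix.of_apply]
          rw [if_pos (by omega : ((p : ℕ) < k + 1))]
          ring
        · rw [Matrix.updateRow_ne hip]
          have hvne : (i : ℕ) ≠ k := by
            intro h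
            exact hip (Fin.ext (by rw [h, hpk]))
          simp only [hA, Matrix.of_apply]
          by_cases hik : (i : ℕ) < k
          · rw [if_pos hik, if_pos (by omega)]
          · rw [if_neg hik, if_neg (by omega)]
  exact (key n le_rfl).symm

lemma Dplus_snoc {n : ℕ} (y : Fin n → Fˣ) (ℓ : Fin (n + 1) → ℤ)
    (hmono : ∀ i : Fin n, ℓ i.succ ≤ ℓ i.castSucc)
    (hpar : ∀ i : Fin n, (ℓ i.castSucc - ℓ i.succ) % 2 = 0) :
    Dplus (Fin.snoc y 1) ℓ =
      2 * ∑ m ∈ Fintype.piFinset (fun i : Fin n =>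
          (Finset.Ioo (ℓ i.succ) (ℓ i.castSucc)).filter fun t => (t - ℓ i.succ) % 2 = 1),
        (∏ j, ((y j : F) - (((y j)⁻¹ : Fˣ) : F))) * Dminus y m := by
  classical
  set z : Fin (n + 1) → Fˣ := Fin.snoc y 1 with hz
  have hzlast : z (Fin.last n) = 1 := by simp [hz]
  have hzcast : ∀ j : Fin n, z j.castSucc = y j := by intro j; simp [hz]
  set M : Matrix (Fin (n + 1)) (Fin (n + 1)) F :=
    Matrix.of fun i j : Fin (n + 1) => ((z j ^ ℓ i : Fˣ) : F) + ((z j ^ (-ℓ i) : Fˣ) : F) with hM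
  have hDp : Dplus z ℓ = M.det := rfl
  rw [hDp, det_rowsub]
  set N : Matrix (Fin (n + 1)) (Fin (n + 1)) F :=
    Matrix.of (fun i j : Fin (n + 1) =>
      if (i : ℕ) < n then M i j - M (i + 1) j else M i j) with hN
  have hlastcol : ∀ i : Fin (n + 1), i ≠ Fin.last n → N i (Fin.last n) = 0 := by
    intro i hi
    have hin : (i : ℕ) < n := by
      have h1 : (i : ℕ) ≠ n := by
        intro h; exact hi (Fin.ext (by rw [h, Fin.val_last]))
      have := i.isLt
      omega
    simp only [hN, Matrix.of_apply, if_pos hin, hM, hzlast, one_zpow, Units.val_one]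
    ring
  have hNll : N (Fin.last n) (Fin.last n) = 2 := by
    simp only [hN, Matrix.of_apply, hM, hzlast, one_zpow, Units.val_one]
    rw [if_neg (by simp)]
    norm_num
  rw [Matrix.det_succ_column N (Fin.last n),
    Fintype.sum_eq_single (Fin.last n) (fun i hi => by rw [hlastcol i hi]; ring), hNll,
    Fin.succAbove_last]
  have hsign : ((-1 : F) ^ ((Fin.last n : ℕ) + (Fin.last n : ℕ))) = 1 := by
    rw [Fin.val_last, ← two_mul, pow_mul]; norm_num
  rw [hsign, one_mul]
  congr 1
  have hsub : N.submatrix Fin.castSucc Fin.castSucc =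
      Matrix.of (fun i : Fin n =>
        ∑ m ∈ (Finset.Ioo (ℓ i.succ) (ℓ i.castSucc)).filter
            (fun t => (t - ℓ i.succ) % 2 = 1),
          fun j : Fin n => ((y j : F) - (((y j)⁻¹ : Fˣ) : F)) *
            (((y j ^ m : Fˣ) : F) - ((y j ^ (-m) : Fˣ) : F))) := by
    ext i j
    simp only [Matrix.submatrix_apply, hN, Matrix.of_apply]
    rw [if_pos (by simp [i.isLt] : ((i.castSucc : ℕ) < n))]
    rw [Fin.coeSucc_eq_succ]
    simp only [hM, Matrix.of_apply, hzcast]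
    rw [tele (y j) (ℓ i.castSucc) (ℓ i.succ) (hmono i) (hpar i)]
    rw [Finset.sum_apply]
    ring
  rw [hsub]
  calc (Matrix.of (fun i : Fin n =>
        ∑ m ∈ (Finset.Ioo (ℓ i.succ) (ℓ i.castSucc)).filter
            (fun t => (t - ℓ i.succ) % 2 = 1),
          fun j : Fin n => ((y j : F) - (((y j)⁻¹ : Fˣ) : F)) *
            (((y j ^ m : Fˣ) : F) - ((y j ^ (-m) : Fˣ) : F)))).det
      = Matrix.detRowAlternating.toMultilinearMap (fun i : Fin n =>
          ∑ m ∈ (Finset.Ioo (ℓ i.succ) (ℓ i.castSucc)).filter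
              (fun t => (t - ℓ i.succ) % 2 = 1),
            fun j : Fin n => ((y j : F) - (((y j)⁻¹ : Fˣ) : F)) *
              (((y j ^ m : Fˣ) : F) - ((y j ^ (-m) : Fˣ) : F))) := rfl
    _ = ∑ r ∈ Fintype.piFinset (fun i : Fin n =>
            (Finset.Ioo (ℓ i.succ) (ℓ i.castSucc)).filter fun t => (t - ℓ i.succ) % 2 = 1),
          Matrix.detRowAlternating.toMultilinearMap (fun i : Fin n =>
            fun j : Fin n => ((y j : F) - (((y j)⁻¹ : Fˣ) : F)) *
              (((y j ^ (r i) : Fˣ) : F) - ((y j ^ (-(r i)) : Fˣ) : F))) :=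
        MultilinearMap.map_sum_finset _ _ _
    _ = ∑ r ∈ Fintype.piFinset (fun i : Fin n =>
            (Finset.Ioo (ℓ i.succ) (ℓ i.castSucc)).filter fun t => (t - ℓ i.succ) % 2 = 1),
          (∏ j, ((y j : F) - (((y j)⁻¹ : Fˣ) : F))) * Dminus y r := by
        refine Finset.sum_congr rfl fun r _ => ?_
        have hdet : Matrix.detRowAlternating.toMultilinearMap (fun i : Fin n =>
            fun j : Fin n => ((y j : F) - (((y j)⁻¹ : Fˣ) : F)) *
              (((y j ^ (r i) : Fˣ) : F) - ((y j ^ (-(r i)) : Fˣ) : F))) =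
            (Matrix.of fun i j : Fin n => ((y j : F) - (((y j)⁻¹ : Fˣ) : F)) *
              ((Matrix.of fun i j : Fin n =>
                ((y j ^ (r i) : Fˣ) : F) - ((y j ^ (-(r i)) : Fˣ) : F)) i j)).det := rfl
        rw [hdet, Matrix.det_mul_row]
        rfl

end helpers

/-- Branching rule for `Spin(2(n+1)) ⊇ Spin(2n+1)`: for a dominant weight
`λ = L/2` (all integers or all half-integers, encoded by the doubled integer tuple `L`
of constant parity with `L` weakly decreasing and `L_{n+1} ≥ 0`),
`χ^{D_{n+1}}_λ|_{x_{n+1}=1} = ∑_{μ ⪯ λ} χ^{B_n}_μ`, where the sum is over dominant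
weights `μ = M/2` of the same parity interlacing `λ`.  Characters are written via
`D^±` in the square-root variables `y i = x_i^{1/2}` (with `x_{n+1} = 1` built in via
`Fin.snoc y 1`); `ρ_{D_{n+1}} = (n, …, 0)` and `ρ_{B_n} = (n - 1/2, …, 1/2)`. -/
theorem spin_even_odd_branching {F : Type*} [Field F] [CharZero F] (n : ℕ)
    (y : Fin n → Fˣ) (L : Fin (n + 1) → ℤ) (hL : Antitone L) (hLn : 0 ≤ L (Fin.last n))
    (hpar : ∀ i, L i % 2 = L 0 % 2)
    (hDden : Dplus (Fin.snoc y 1) (fun i : Fin (n + 1) => 2 * ((n : ℤ) - i.val)) ≠ 0)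
    (hBden : Dminus y (fun i : Fin n => 2 * ((n : ℤ) - i.val) - 1) ≠ 0) :
    ((1 / 2 : F) *
        (Dminus (Fin.snoc y 1) (fun i : Fin (n + 1) => L i + 2 * ((n : ℤ) - i.val)) +
          Dplus (Fin.snoc y 1) (fun i : Fin (n + 1) => L i + 2 * ((n : ℤ) - i.val)))) /
        ((1 / 2 : F) * Dplus (Fin.snoc y 1) (fun i : Fin (n + 1) => 2 * ((n : ℤ) - i.val))) =
      ∑ M ∈ (Finset.Icc (fun i : Fin n => L i.succ) fun i => L i.castSucc).filter
          (fun M => ∀ i, (M i - L 0) % 2 = 0),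
        Dminus y (fun i : Fin n => M i + 2 * ((n : ℤ) - i.val) - 1) /
          Dminus y (fun i : Fin n => 2 * ((n : ℤ) - i.val) - 1) := by
  classical
  set ℓ₁ : Fin (n + 1) → ℤ := fun i : Fin (n + 1) => L i + 2 * ((n : ℤ) - i.val) with hℓ₁
  set ℓ₀ : Fin (n + 1) → ℤ := fun i : Fin (n + 1) => 2 * ((n : ℤ) - i.val) with hℓ₀
  -- the D⁻ numerator term vanishes (last column is zero)
  have hnum0 : Dminus (Fin.snoc y 1) ℓ₁ = 0 := by
    unfold Dminus
    apply Matrix.det_eq_zero_of_column_eq_zero (Fin.last n)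
    intro i
    simp [Fin.snoc_last]
  -- expand numerator and denominator
  have h1 := Dplus_snoc y ℓ₁
    (fun i => by
      have := hL (Fin.castSucc_lt_succ : i.castSucc < i.succ).le
      simp only [hℓ₁, Fin.val_succ, Fin.coe_castSucc]
      push_cast
      omega)
    (fun i => by
      have hp1 := hpar i.succ
      have hp2 := hpar i.castSucc
      simp only [hℓ₁, Fin.val_succ, Fin.coe_castSucc]
      push_cast
      omega)
  have h0 := Dplus_snoc y ℓ₀
    (fun i => by
      simp only [hℓ₀, Fin.val_succ, Fin.coe_castSucc]
      push_cast
      omega)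
    (fun i => by
      simp only [hℓ₀, Fin.val_succ, Fin.coe_castSucc]
      push_cast
      omega)
  -- the denominator index set is a single point
  have hT0 : (fun i : Fin n =>
      (Finset.Ioo (ℓ₀ i.succ) (ℓ₀ i.castSucc)).filter fun t => (t - ℓ₀ i.succ) % 2 = 1) =
      fun i : Fin n => ({2 * ((n : ℤ) - i.val) - 1} : Finset ℤ) := by
    funext i
    ext t
    simp only [Finset.mem_filter, Finset.mem_Ioo, Finset.mem_singleton, hℓ₀,
      Fin.val_succ, Fin.coe_castSucc]
    push_cast
    omega
  have hpi0 : Fintype.piFinset (fun i : Fin n => ({2 * ((n : ℤ) - i.val) - 1} : Finset ℤ)) =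
      {fun i : Fin n => 2 * ((n : ℤ) - i.val) - 1} := by
    ext g
    simp [Fintype.mem_piFinset, funext_iff]
  rw [hT0, hpi0, Finset.sum_singleton] at h0
  set P : F := ∏ j, ((y j : F) - (((y j)⁻¹ : Fˣ) : F)) with hP
  set d : F := Dminus y (fun i : Fin n => 2 * ((n : ℤ) - i.val) - 1) with hd
  have hPd : 2 * (P * d) ≠ 0 := h0 ▸ hDden
  have hPne : P ≠ 0 := by
    intro h
    exact hPd (by rw [h]; ring)
  rw [hnum0, zero_add, h1, h0]
  have e : ∀ X : F, (1 / 2 : F) * (2 * X) = X := fun X => by ring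
  rw [e, e]
  have e2 : ∀ r : Fin n → ℤ, P * Dminus y r / (P * d) = Dminus y r / d := fun r =>
    mul_div_mul_left _ _ hPne
  calc (∑ r ∈ Fintype.piFinset (fun i : Fin n =>
        (Finset.Ioo (ℓ₁ i.succ) (ℓ₁ i.castSucc)).filter fun t => (t - ℓ₁ i.succ) % 2 = 1),
          P * Dminus y r) / (P * d)
      = ∑ r ∈ Fintype.piFinset (fun i : Fin n =>
          (Finset.Ioo (ℓ₁ i.succ) (ℓ₁ i.castSucc)).filter fun t => (t - ℓ₁ i.succ) % 2 = 1),
            Dminus y r / d := by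
        rw [Finset.sum_div]
        exact Finset.sum_congr rfl fun r _ => e2 r
    _ = ∑ M ∈ (Finset.Icc (fun i : Fin n => L i.succ) fun i => L i.castSucc).filter
          (fun M => ∀ i, (M i - L 0) % 2 = 0),
          Dminus y (fun i : Fin n => M i + 2 * ((n : ℤ) - i.val) - 1) / d := by
        refine Finset.sum_nbij' (fun r : Fin n → ℤ => fun i : Fin n => r i - 2 * ((n : ℤ) - i.val) + 1)
          (fun M : Fin n → ℤ => fun i : Fin n => M i + 2 * ((n : ℤ) - i.val) - 1)
          ?_ ?_ ?_ ?_ ?_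
        · intro r hr
          simp only [Fintype.mem_piFinset, Finset.mem_filter, Finset.mem_Ioo, hℓ₁,
            Fin.val_succ, Fin.coe_castSucc] at hr
          simp only [Finset.mem_filter, Finset.mem_Icc, Pi.le_def]
          refine ⟨⟨fun i => ?_, fun i => ?_⟩, fun i => ?_⟩
          · have h := hr i
            have hp1 := hpar i.succ
            push_cast at h ⊢
            omega
          · have h := hr i
            push_cast at h ⊢
            omega
          · have h := hr i
            have hp1 := hpar i.succ
            push_cast at h ⊢
            omega
        · intro M hM
          simp only [Finset.mem_filter, Finset.mem_Icc, Pi.le_def] at hM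
          simp only [Fintype.mem_piFinset, Finset.mem_filter, Finset.mem_Ioo, hℓ₁,
            Fin.val_succ, Fin.coe_castSucc]
          intro i
          have h1' := hM.1.1 i
          have h2' := hM.1.2 i
          have h3' := hM.2 i
          have hp1 := hpar i.succ
          have hp2 := hpar i.castSucc
          push_cast
          constructor
          · constructor <;> omega
          · omega
        · intro r hr
          funext i
          dsimp only
          ring
        · intro M hM
          funext i
          dsimp only
          ring
        · intro r hr
          have hfun : (fun i : Fin n =>
              (r i - 2 * ((n : ℤ) - i.val) + 1) + 2 * ((n : ℤ) - i.val) - 1) = r := by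
            funext i; ring
          dsimp only
          rw [hfun]
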